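/- Let 0 < ε ≤ 1, let k ≥ 2, and let X ⊆ ℝ^d be finite and (k,ε)-irreducible, with optimal k-means partition X₁,…,X_k. Then for all 1 ≤ i < j ≤ k, ‖μ_i − μ_j‖² ≥ ε·(r_i + r_j). -/

import Mathlib

open Finset
open scoped BigOperators
open Classical

noncomputable section

/-- Points of `ℝ^d`. -/
abbrev Pt (d : ℕ) := EuclideanSpace ℝ (Fin d)

/-- `Φ(C, X) = Σ_{x ∈ X} min_{c ∈ C} ‖x - c‖²`. -/
noncomputable def Phi {d : ℕ} (C X : Finset (Pt d)) : ℝ :=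
  ∑ x ∈ X, sInf ((fun c => ‖x - c‖ ^ 2) '' (C : Set (Pt d)))

/-- The centroid `μ(X)` of a finite set of points. -/
noncomputable def ctr {d : ℕ} (X : Finset (Pt d)) : Pt d :=
  (X.card : ℝ)⁻¹ • ∑ x ∈ X, x

/-- `Δ₁(X) = Φ({μ(X)}, X)`. -/
noncomputable def Delta1 {d : ℕ} (X : Finset (Pt d)) : ℝ := Phi {ctr X} X

/-- `Δ_k(X)`: the optimal `k`-means cost of `X`. -/
noncomputable def DeltaK {d : ℕ} (k : ℕ) (X : Finset (Pt d)) : ℝ :=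
  sInf ((fun C => Phi C X) '' {C : Finset (Pt d) | C.card = k})

/-- `X₁, …, X_k` is an optimal `k`-means partition of `X`. -/
def IsOptPartition {d : ℕ} (k : ℕ) (X : Finset (Pt d)) (Xs : Fin k → Finset (Pt d)) : Prop :=
  (∀ j, (Xs j).Nonempty) ∧
  (∀ j l, j ≠ l → Disjoint (Xs j) (Xs l)) ∧
  Finset.univ.biUnion Xs = X ∧
  ∑ j, Delta1 (Xs j) = DeltaK k X

/-- `X` is `(k, ε)`-irreducible: `Δ_{k-1}(X) ≥ (1+ε)·Δ_k(X)`. -/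
def KIrreducible {d : ℕ} (k : ℕ) (ε : ℝ) (X : Finset (Pt d)) : Prop :=
  (1 + ε) * DeltaK k X ≤ DeltaK (k - 1) X

/-- The invariant `P(i)`: `Ci` consists of the centers `c r` for `r < i` (clusters reindexed
so that the covered clusters come first), each `c r` is a `(1 + ε/16)`-good center for the
optimal cluster `Xs r`, and `Φ(Ci, X) > 0`. -/
def InvariantP {d k : ℕ} (ε : ℝ) (X : Finset (Pt d)) (Xs : Fin k → Finset (Pt d))
    (i : ℕ) (c : Fin k → Pt d) (Ci : Finset (Pt d)) : Prop :=
  Ci = Finset.image c (Finset.univ.filter (fun r : Fin k => r.val < i)) ∧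
  (∀ r : Fin k, r.val < i → Phi {c r} (Xs r) ≤ (1 + ε / 16) * Delta1 (Xs r)) ∧
  0 < Phi Ci X

lemma phi_singleton {d} (c : Pt d) (Y : Finset (Pt d)) :
    Phi {c} Y = ∑ x ∈ Y, ‖x - c‖ ^ 2 := by
  unfold Phi
  refine Finset.sum_congr rfl fun x _ => ?_
  simp

lemma phi_nonneg {d} (C X : Finset (Pt d)) : 0 ≤ Phi C X := by
  refine Finset.sum_nonneg fun x _ => Real.sInf_nonneg ?_
  rintro y ⟨c, -, rfl⟩
  positivity

lemma phi_anti {d} {C C' : Finset (Pt d)} (X : Finset (Pt d)) (hC : C.Nonempty)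
    (hsub : C ⊆ C') : Phi C' X ≤ Phi C X := by
  refine Finset.sum_le_sum fun x _ => ?_
  refine csInf_le_csInf ⟨0, ?_⟩ (hC.to_set.image _) (Set.image_mono (by exact_mod_cast hsub))
  rintro y ⟨c, -, rfl⟩
  positivity

lemma phi_le_single {d} {C : Finset (Pt d)} {c : Pt d} (hc : c ∈ C) (X : Finset (Pt d)) :
    Phi C X ≤ Phi {c} X := by
  rw [phi_singleton]
  refine Finset.sum_le_sum fun x _ => ?_
  refine csInf_le ⟨0, ?_⟩ ⟨c, by simpa using hc, rfl⟩
  rintro y ⟨c', -, rfl⟩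
  positivity

lemma sum_sub_ctr {d} {Y : Finset (Pt d)} (hY : Y.Nonempty) :
    ∑ x ∈ Y, (x - ctr Y) = 0 := by
  have hc : (Y.card : ℝ) ≠ 0 := by
    exact_mod_cast Finset.card_ne_zero_of_mem hY.choose_spec
  rw [Finset.sum_sub_distrib, Finset.sum_const, ctr,
    ← Nat.cast_smul_eq_nsmul ℝ, smul_smul, mul_inv_cancel₀ hc, one_smul, sub_self]

lemma phi_single_eq {d} {Y : Finset (Pt d)} (hY : Y.Nonempty) (c : Pt d) :
    Phi {c} Y = Delta1 Y + (Y.card : ℝ) * ‖ctr Y - c‖ ^ 2 := by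
  rw [Delta1, phi_singleton, phi_singleton]
  have key : ∀ x : Pt d, ‖x - c‖ ^ 2
      = ‖x - ctr Y‖ ^ 2 + 2 * (inner ℝ (x - ctr Y) (ctr Y - c) : ℝ) + ‖ctr Y - c‖ ^ 2 := by
    intro x
    have := norm_add_sq_real (x - ctr Y) (ctr Y - c)
    rwa [sub_add_sub_cancel] at this
  rw [Finset.sum_congr rfl fun x _ => key x,
    Finset.sum_add_distrib, Finset.sum_add_distrib, ← Finset.mul_sum, ← sum_inner,
    sum_sub_ctr hY, inner_zero_left, mul_zero, add_zero, Finset.sum_const, nsmul_eq_mul]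

lemma deltaK_le {d} (n : ℕ) (C X : Finset (Pt d)) (h : C.card = n) :
    DeltaK n X ≤ Phi C X := by
  refine csInf_le ⟨0, ?_⟩ ⟨C, h, rfl⟩
  rintro y ⟨C', -, rfl⟩
  exact phi_nonneg _ _

lemma ptInfinite {d : ℕ} (hd : 0 < d) : Infinite (Pt d) := by
  refine Infinite.of_injective (fun t : ℝ => WithLp.toLp 2 (fun _ => t : Fin d → ℝ)) ?_
  intro a b hab
  exact congrFun (congrArg WithLp.ofLp hab) ⟨0, hd⟩

lemma ptSubsingleton : Subsingleton (Pt 0) :=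
  ⟨fun a b => by ext x; exact x.elim0⟩

lemma key_ineq {d k : ℕ} {ε : ℝ} (hε0 : 0 < ε)
    {X : Finset (Pt d)} (hirr : KIrreducible k ε X)
    {Xs : Fin k → Finset (Pt d)} (hopt : IsOptPartition k X Xs)
    (i j : Fin k) (hij : i ≠ j) (hcard : (Xs j).card ≤ (Xs i).card) :
    ε * (Delta1 (Xs i) / ((Xs i).card : ℝ) + Delta1 (Xs j) / ((Xs j).card : ℝ)) ≤
      ‖ctr (Xs i) - ctr (Xs j)‖ ^ 2 := by
  obtain ⟨hne, hdisj, hun, hsum⟩ := hopt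
  rcases Nat.eq_zero_or_pos d with hd | hd
  · subst hd
    obtain ⟨x, hx⟩ := hne i
    obtain ⟨y, hy⟩ := hne j
    have hxy : x = y := @Subsingleton.elim _ ptSubsingleton x y
    exact absurd (hxy ▸ hy) (Finset.disjoint_left.mp (hdisj i j hij) hx)
  · haveI := ptInfinite hd
    set C0 : Finset (Pt d) := (Finset.univ.erase j).image (fun r => ctr (Xs r)) with hC0
    have hiC0 : ctr (Xs i) ∈ C0 :=
      Finset.mem_image_of_mem _ (Finset.mem_erase.mpr ⟨hij, Finset.mem_univ i⟩)
    have hC0card : C0.card ≤ k - 1 := by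
      calc C0.card ≤ (Finset.univ.erase j).card := Finset.card_image_le
        _ = k - 1 := by
          rw [Finset.card_erase_of_mem (Finset.mem_univ j), Finset.card_univ, Fintype.card_fin]
    obtain ⟨C1, hsub, hC1card⟩ := Infinite.exists_superset_card_eq C0 (k-1) hC0card
    set T := ((Xs j).card : ℝ) * ‖ctr (Xs j) - ctr (Xs i)‖ ^ 2 with hT
    have step : ∀ r : Fin k, Phi C0 (Xs r) ≤ Delta1 (Xs r) + (if r = j then T else 0) := by
      intro r
      by_cases hr : r = j
      · subst hr
        calc Phi C0 (Xs r) ≤ Phi {ctr (Xs i)} (Xs r) := phi_le_single hiC0 _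
          _ = Delta1 (Xs r) + ((Xs r).card : ℝ) * ‖ctr (Xs r) - ctr (Xs i)‖ ^ 2 :=
            phi_single_eq (hne r) _
          _ = Delta1 (Xs r) + (if r = r then T else 0) := by rw [if_pos rfl]
      · have hrC0 : ctr (Xs r) ∈ C0 :=
          Finset.mem_image_of_mem _ (Finset.mem_erase.mpr ⟨hr, Finset.mem_univ r⟩)
        calc Phi C0 (Xs r) ≤ Phi {ctr (Xs r)} (Xs r) := phi_le_single hrC0 _
          _ = Delta1 (Xs r) := rfl
          _ = Delta1 (Xs r) + (if r = j then T else 0) := by rw [if_neg hr, add_zero]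
    have hparts : Phi C0 X = ∑ r, Phi C0 (Xs r) := by
      rw [← hun, Phi, Finset.sum_biUnion]
      · rfl
      · intro a _ b _ hab
        exact hdisj a b hab
    set S := ∑ r, Delta1 (Xs r) with hS
    have hcost : Phi C0 X ≤ S + T := by
      rw [hparts]
      calc ∑ r, Phi C0 (Xs r) ≤ ∑ r, (Delta1 (Xs r) + if r = j then T else 0) :=
            Finset.sum_le_sum fun r _ => step r
        _ = S + T := by
          rw [Finset.sum_add_distrib, Finset.sum_ite_eq' Finset.univ j (fun _ => T),
            if_pos (Finset.mem_univ j)]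
    have h1 : DeltaK (k-1) X ≤ S + T :=
      le_trans (le_trans (deltaK_le _ _ _ hC1card) (phi_anti X ⟨_, hiC0⟩ hsub)) hcost
    have h2 : ε * S ≤ T := by
      have h3 := le_trans hirr h1
      rw [← hsum] at h3
      linarith
    have hDnn : ∀ r, 0 ≤ Delta1 (Xs r) := fun r => phi_nonneg _ _
    have hij_le : Delta1 (Xs i) + Delta1 (Xs j) ≤ S := by
      rw [hS, ← Finset.sum_pair (f := fun r => Delta1 (Xs r)) hij]
      exact Finset.sum_le_sum_of_subset_of_nonneg (Finset.subset_univ _) fun r _ _ => hDnn r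
    have hmj : (0:ℝ) < ((Xs j).card : ℝ) := by exact_mod_cast Finset.card_pos.mpr (hne j)
    have hci : ((Xs j).card : ℝ) ≤ ((Xs i).card : ℝ) := by exact_mod_cast hcard
    have hnorm : ‖ctr (Xs i) - ctr (Xs j)‖ = ‖ctr (Xs j) - ctr (Xs i)‖ := norm_sub_rev _ _
    rw [hnorm]
    set t := ‖ctr (Xs j) - ctr (Xs i)‖ ^ 2 with ht
    have e1 : Delta1 (Xs i) / ((Xs i).card : ℝ) ≤ Delta1 (Xs i) / ((Xs j).card : ℝ) :=
      div_le_div_of_nonneg_left (hDnn i) hmj hci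
    have e3 : Delta1 (Xs i) / ((Xs j).card : ℝ) + Delta1 (Xs j) / ((Xs j).card : ℝ) ≤
        S / ((Xs j).card : ℝ) := by
      rw [← add_div]
      gcongr
    calc ε * (Delta1 (Xs i) / ((Xs i).card : ℝ) + Delta1 (Xs j) / ((Xs j).card : ℝ))
        ≤ ε * (S / ((Xs j).card : ℝ)) := mul_le_mul_of_nonneg_left (by linarith) hε0.le
      _ ≤ t := by
          rw [← mul_div_assoc, div_le_iff₀ hmj]
          calc ε * S ≤ T := h2
            _ = t * ((Xs j).card : ℝ) := by rw [hT, mul_comm]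

/-- If `0 < ε ≤ 1`, `k ≥ 2` and `X` is `(k, ε)`-irreducible with optimal
`k`-means partition `X₁, …, X_k`, then for all `i ≠ j`,
`‖μ_i − μ_j‖² ≥ ε·(r_i + r_j)` where `r_i = Δ₁(X_i)/|X_i|`. -/
theorem stmt_6 {d k : ℕ} (hk : 2 ≤ k) (ε : ℝ) (hε0 : 0 < ε) (hε1 : ε ≤ 1)
    (X : Finset (Pt d)) (hirr : KIrreducible k ε X)
    (Xs : Fin k → Finset (Pt d)) (hopt : IsOptPartition k X Xs) :
    ∀ i j : Fin k, i ≠ j →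
      ε * (Delta1 (Xs i) / ((Xs i).card : ℝ) + Delta1 (Xs j) / ((Xs j).card : ℝ)) ≤
        ‖ctr (Xs i) - ctr (Xs j)‖ ^ 2 := by
  intro i j hij
  rcases le_total ((Xs j).card) ((Xs i).card) with h | h
  · exact key_ineq hε0 hirr hopt i j hij h
  · have := key_ineq hε0 hirr hopt j i hij.symm h
    rw [norm_sub_rev]
    linarith
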